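/- Let f : [a, b] → ℝ be a differentiable function (with a < b). Suppose that for every x ∈ (a, b), either f′(x) ≤ 0 or f(x) ≤ f(a). Then f(b) ≤ f(a). -/
import Mathlib

/-- Let `f : [a, b] → ℝ` be differentiable with `a < b`. If for every
`x ∈ (a, b)` either `f'(x) ≤ 0` or `f x ≤ f a`, then `f b ≤ f a`. -/
theorem le_of_deriv_nonpos_or_le (f f' : ℝ → ℝ) (a b : ℝ) (hab : a < b)
    (hderiv : ∀ x ∈ Set.Icc a b, HasDerivAt f (f' x) x)
    (h : ∀ x ∈ Set.Ioo a b, f' x ≤ 0 ∨ f x ≤ f a) :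
    f b ≤ f a := by
  have hcont : ContinuousOn f (Set.Icc a b) := fun x hx =>
    (hderiv x hx).continuousAt.continuousWithinAt
  set S : Set ℝ := Set.Icc a b ∩ f ⁻¹' Set.Iic (f a) with hS
  have haS : a ∈ S := ⟨⟨le_refl a, hab.le⟩, Set.mem_preimage.mpr Set.self_mem_Iic⟩
  have hSne : S.Nonempty := ⟨a, haS⟩
  have hSbdd : BddAbove S := ⟨b, fun x hx => hx.1.2⟩
  set c := sSup S with hc
  have hcb : c ≤ b := csSup_le hSne fun x hx => hx.1.2
  have hac : a ≤ c := le_csSup hSbdd haS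
  have hSclosed : IsClosed S :=
    hcont.preimage_isClosed_of_isClosed isClosed_Icc isClosed_Iic
  have hcS : c ∈ S := hSclosed.csSup_mem hSne hSbdd
  rcases eq_or_lt_of_le hcb with hcb' | hcb'
  · rw [← hcb']; exact hcS.2
  · have hanti : AntitoneOn f (Set.Icc c b) := by
      apply antitoneOn_of_deriv_nonpos (convex_Icc c b)
      · exact hcont.mono (Set.Icc_subset_Icc hac le_rfl)
      · intro x hx
        rw [interior_Icc] at hx
        have hx' : x ∈ Set.Ioo a b := ⟨lt_of_le_of_lt hac hx.1, hx.2⟩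
        exact ((hderiv x (Set.Ioo_subset_Icc_self hx')).differentiableAt).differentiableWithinAt
      · intro x hx
        rw [interior_Icc] at hx
        have hx' : x ∈ Set.Ioo a b := ⟨lt_of_le_of_lt hac hx.1, hx.2⟩
        have hd : deriv f x = f' x :=
          (hderiv x (Set.Ioo_subset_Icc_self hx')).deriv
        rw [hd]
        rcases h x hx' with h1 | h1
        · exact h1
        · exact absurd (le_csSup hSbdd ⟨Set.Ioo_subset_Icc_self hx', h1⟩)
            (not_le.mpr hx.1)
    calc f b ≤ f c := hanti ⟨le_rfl, hcb⟩ ⟨hcb, le_rfl⟩ hcb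
    _ ≤ f a := hcS.2
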